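/- arXiv:1511.00106 — 3 statements merged into one kernel-verified Lean document; each statement's English description precedes it below -/
import Mathlib

section
/- Assume the balance condition α + γ > 1 and set δ = 1 − 1/α + γ/α > 0. For every T > 0 there exists C > 0 such that for every x ∈ ℝ^d, every solution υ_·(x) ∈ Υ(x) of the Cauchy problem dυ_t/dt = b(υ_t), υ_0 = x, and all 0 ≤ s ≤ t ≤ T, one has |υ_t(x) − υ_t^s(x)| ≤ C t^{1 + γ/α} = C t^{1/α + δ}, where υ_t^s(x) is the unique solution of dυ_t/dt = b(|t−s|, υ_t), υ_0 = x. The constant C is uniform in x, s and in the choice of the solution υ_·(x) ∈ Υ(x). -/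
open MeasureTheory Real Set

/-- `Euc d` is the Euclidean space `ℝ^d`. -/
abbrev Euc (d : ℕ) := EuclideanSpace ℝ (Fin d)

/-- The Gaussian mollification `b(t,x)` of the drift `b` at scale `t^{1/α}`:
`b(t,x) = (2π)^{-d/2} t^{-d/α} ∫ b(z) exp(-|z-x|²/(2 t^{2/α})) dz` for `t > 0`
(with the natural boundary value `b(x)` for `t ≤ 0`). -/
noncomputable def moll (d : ℕ) (α : ℝ) (b : Euc d → Euc d) (t : ℝ) (x : Euc d) : Euc d :=
  if t ≤ 0 then b x
  else ((2 * Real.pi) ^ (-(d : ℝ) / 2) * t ^ (-(d : ℝ) / α)) •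
    ∫ z : Euc d, Real.exp (-‖z - x‖ ^ 2 / (2 * t ^ (2 / α))) • b z

/-- `IsSol F x0 f` : `f` solves the Cauchy problem `f' (t) = F t (f t)` on `[0,∞)`, `f 0 = x0`. -/
def IsSol (d : ℕ) (F : ℝ → Euc d → Euc d) (x0 : Euc d) (f : ℝ → Euc d) : Prop :=
  f 0 = x0 ∧ ∀ t : ℝ, 0 ≤ t → HasDerivWithinAt f (F t (f t)) (Set.Ici 0) t

/-! ### Auxiliary lemmas -/

lemma integrable_gauss_euc {d : ℕ} {p : ℝ} (hp : 0 < p) :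
    Integrable (fun z : Euc d => rexp (-p * ‖z‖ ^ 2)) := by
  have h := (GaussianFourier.integrable_cexp_neg_mul_sq_norm_add
      (V := Euc d) (b := (p : ℂ)) (by simpa using hp) 0 0).norm
  refine h.congr (Filter.Eventually.of_forall fun z => ?_)
  simp [Complex.norm_exp, ← Complex.ofReal_pow]

lemma gauss_int_euc {d : ℕ} (x : Euc d) {p : ℝ} (hp : 0 < p) :
    ∫ z : Euc d, rexp (-p * ‖z - x‖ ^ 2) = (π / p) ^ ((d : ℝ) / 2) := by
  have h := integral_add_right_eq_self (μ := (volume : Measure (Euc d)))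
      (fun y : Euc d => rexp (-p * ‖y‖ ^ 2)) (-x)
  simp_rw [← sub_eq_add_neg] at h
  rw [h, GaussianFourier.integral_rexp_neg_mul_sq_norm hp]
  norm_num [finrank_euclideanSpace_fin]

/-- Key elementary inequality : `a ^ γ ≤ q ^ γ + q ^ (γ-1) * a`. -/
lemma rpow_le_add_aux {a q γ : ℝ} (hγ0 : 0 < γ) (hγ1 : γ ≤ 1) (hq : 0 < q) (ha : 0 ≤ a) :
    a ^ γ ≤ q ^ γ + q ^ (γ - 1) * a := by
  rcases le_total a q with h | h
  · have h1 : a ^ γ ≤ q ^ γ := Real.rpow_le_rpow ha h hγ0.le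
    have h2 : 0 ≤ q ^ (γ - 1) * a := mul_nonneg (Real.rpow_pos_of_pos hq _).le ha
    linarith
  · have ha' : 0 < a := lt_of_lt_of_le hq h
    have h1 : a ^ γ = a ^ (γ - 1) * a := by
      rw [← Real.rpow_add_one ha'.ne' (γ - 1)]; ring_nf
    have h2 : a ^ (γ - 1) ≤ q ^ (γ - 1) :=
      Real.rpow_le_rpow_of_nonpos hq h (by linarith)
    have h3 : 0 < q ^ γ := Real.rpow_pos_of_pos hq _
    nlinarith [mul_le_mul_of_nonneg_right h2 ha'.le]

lemma kernel_pt_bound {γ q y : ℝ} (hγ0 : 0 < γ) (hγ1 : γ ≤ 1) (hq : 0 < q) (hy : 0 ≤ y) :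
    rexp (-y ^ 2 / (2 * q ^ 2)) * y ^ γ ≤ 2 * q ^ γ * rexp (-y ^ 2 / (4 * q ^ 2)) := by
  have h1 : y ^ γ ≤ q ^ γ + q ^ (γ - 1) * y := rpow_le_add_aux hγ0 hγ1 hq hy
  have hqγ : 0 < q ^ γ := Real.rpow_pos_of_pos hq _
  have hq1 : q ^ (γ - 1) = q ^ γ / q := by
    rw [Real.rpow_sub hq, Real.rpow_one]
  have h2 : y / q ≤ rexp (y ^ 2 / (4 * q ^ 2)) := by
    have ha : y / q ≤ 1 + (y / q) ^ 2 / 4 := by nlinarith [sq_nonneg (y / q - 2)]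
    have hb : 1 + (y / q) ^ 2 / 4 ≤ rexp ((y / q) ^ 2 / 4) := by
      have := Real.add_one_le_exp ((y / q) ^ 2 / 4); linarith
    have hc : (y / q) ^ 2 / 4 = y ^ 2 / (4 * q ^ 2) := by
      rw [div_pow]; ring
    rw [hc] at hb; linarith
  have h3 : 1 ≤ rexp (y ^ 2 / (4 * q ^ 2)) :=
    Real.one_le_exp (by positivity)
  have key : y ^ γ ≤ 2 * q ^ γ * rexp (y ^ 2 / (4 * q ^ 2)) := by
    have h4 : q ^ (γ - 1) * y = q ^ γ * (y / q) := by
      rw [hq1]; field_simp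
    nlinarith [mul_le_mul_of_nonneg_left h2 hqγ.le]
  have h5 : 0 ≤ rexp (-y ^ 2 / (2 * q ^ 2)) := (Real.exp_pos _).le
  calc rexp (-y ^ 2 / (2 * q ^ 2)) * y ^ γ
      ≤ rexp (-y ^ 2 / (2 * q ^ 2)) * (2 * q ^ γ * rexp (y ^ 2 / (4 * q ^ 2))) :=
        mul_le_mul_of_nonneg_left key h5
    _ = 2 * q ^ γ * rexp (-y ^ 2 / (2 * q ^ 2) + y ^ 2 / (4 * q ^ 2)) := by
        rw [Real.exp_add]; ring
    _ = 2 * q ^ γ * rexp (-y ^ 2 / (4 * q ^ 2)) := by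
        congr 1; field_simp; ring

/-- The mollification error bound : `‖moll r x - b x‖ ≤ C₀ 2^{d/2+1} r^{γ/α}`. -/
lemma moll_err {d : ℕ} {α γ C₀ : ℝ} (hα : 0 < α) (hγ0 : 0 < γ) (hγ1 : γ ≤ 1)
    (hC₀ : 0 < C₀) {b : Euc d → Euc d} (hb_cont : Continuous b)
    (hb_bdd : ∀ x, ‖b x‖ ≤ C₀) (hb_hol : ∀ x y, ‖b x - b y‖ ≤ C₀ * ‖x - y‖ ^ γ)
    {r : ℝ} (hr0 : 0 ≤ r) (x : Euc d) :
    ‖moll d α b r x - b x‖ ≤ C₀ * 2 ^ ((d : ℝ) / 2 + 1) * r ^ (γ / α) := by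
  rcases eq_or_lt_of_le hr0 with h0 | hr
  · rw [moll, if_pos (le_of_eq h0.symm), sub_self, norm_zero, ← h0,
      Real.zero_rpow (by positivity : 0 < γ / α).ne']
    simp
  have hq : (0:ℝ) < r ^ (1/α) := Real.rpow_pos_of_pos hr _
  set q : ℝ := r ^ (1/α) with hqdef
  have hq2 : q ^ 2 = r ^ (2/α) := by
    rw [hqdef, ← Real.rpow_natCast (r ^ (1/α)) 2, ← Real.rpow_mul hr0]
    congr 1
    push_cast; ring
  set p : ℝ := 1 / (2 * q ^ 2) with hpdef
  have hp0 : 0 < p := by positivity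
  have kernel_eq : ∀ z : Euc d,
      rexp (-‖z - x‖ ^ 2 / (2 * r ^ (2/α))) = rexp (-p * ‖z - x‖ ^ 2) := by
    intro z; congr 1; rw [← hq2, hpdef]; field_simp
  have hint : Integrable (fun z : Euc d => rexp (-p * ‖z - x‖ ^ 2)) :=
    (integrable_gauss_euc hp0).comp_sub_right x
  have hval : ∫ z : Euc d, rexp (-p * ‖z - x‖ ^ 2) = (π / p) ^ ((d : ℝ) / 2) :=
    gauss_int_euc x hp0
  set c : ℝ := (2 * π) ^ (-(d : ℝ) / 2) * r ^ (-(d : ℝ) / α) with hcdef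
  have hc0 : 0 < c := mul_pos (Real.rpow_pos_of_pos (by positivity) _)
    (Real.rpow_pos_of_pos hr _)
  have hcA : c * (π / p) ^ ((d : ℝ) / 2) = 1 := by
    have hπp : π / p = (2 * π) * r ^ (2/α) := by
      rw [hpdef, ← hq2]; field_simp
    rw [hπp, Real.mul_rpow (by positivity) (by positivity)]
    have h1 : (r ^ (2/α)) ^ ((d : ℝ) / 2) = r ^ ((d : ℝ)/α) := by
      rw [← Real.rpow_mul hr0]; congr 1; field_simp
    rw [h1, hcdef]
    rw [show (2 * π) ^ (-(d:ℝ)/2) * r ^ (-(d:ℝ)/α) * ((2*π) ^ ((d:ℝ)/2) * r ^ ((d:ℝ)/α))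
      = ((2*π) ^ (-(d:ℝ)/2) * (2*π) ^ ((d:ℝ)/2)) * (r ^ (-(d:ℝ)/α) * r ^ ((d:ℝ)/α)) by ring,
      ← Real.rpow_add (by positivity), ← Real.rpow_add hr,
      show -(d:ℝ)/2 + (d:ℝ)/2 = 0 by ring, show -(d:ℝ)/α + (d:ℝ)/α = 0 by ring,
      Real.rpow_zero, Real.rpow_zero, mul_one]
  have hcont_g : Continuous (fun z : Euc d => rexp (-p * ‖z - x‖ ^ 2)) := by
    fun_prop
  have hint1 : Integrable (fun z : Euc d => rexp (-p * ‖z - x‖ ^ 2) • b z) := by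
    refine (hint.const_mul C₀).mono'
      ((hcont_g.smul hb_cont).aestronglyMeasurable) (Filter.Eventually.of_forall fun z => ?_)
    rw [norm_smul, Real.norm_eq_abs, abs_of_nonneg (Real.exp_pos _).le, mul_comm C₀]
    exact mul_le_mul_of_nonneg_left (hb_bdd z) (Real.exp_pos _).le
  have hint2 : Integrable (fun z : Euc d => rexp (-p * ‖z - x‖ ^ 2) • b x) :=
    hint.smul_const (b x)
  have hmoll : moll d α b r x = c • ∫ z : Euc d, rexp (-p * ‖z - x‖ ^ 2) • b z := by
    have hfun : (fun z : Euc d => rexp (-‖z - x‖ ^ 2 / (2 * r ^ (2/α))) • b z)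
        = (fun z : Euc d => rexp (-p * ‖z - x‖ ^ 2) • b z) :=
      funext fun z => by rw [kernel_eq z]
    rw [moll, if_neg (not_le.2 hr), hfun]
  have hdiff : moll d α b r x - b x = c • ∫ z : Euc d, rexp (-p * ‖z - x‖ ^ 2) • (b z - b x) := by
    rw [hmoll]
    have h1 : ∫ z : Euc d, rexp (-p * ‖z - x‖ ^ 2) • (b z - b x)
        = (∫ z : Euc d, rexp (-p * ‖z - x‖ ^ 2) • b z)
          - ∫ z : Euc d, rexp (-p * ‖z - x‖ ^ 2) • b x := by
      simp_rw [smul_sub]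
      exact integral_sub hint1 hint2
    rw [h1, smul_sub]
    congr 1
    rw [integral_smul_const, hval, smul_smul, hcA, one_smul]
  have hbound : ∀ z : Euc d, ‖rexp (-p * ‖z - x‖ ^ 2) • (b z - b x)‖
      ≤ (2 * C₀ * q ^ γ) * rexp (-(p/2) * ‖z - x‖ ^ 2) := by
    intro z
    have e1 : -p * ‖z - x‖ ^ 2 = -‖z - x‖ ^ 2 / (2 * q ^ 2) := by
      rw [hpdef]; ring
    have e2 : -(p/2) * ‖z - x‖ ^ 2 = -‖z - x‖ ^ 2 / (4 * q ^ 2) := by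
      rw [hpdef]; ring
    rw [norm_smul, Real.norm_eq_abs, abs_of_nonneg (Real.exp_pos _).le, e1, e2]
    calc rexp (-‖z - x‖ ^ 2 / (2 * q ^ 2)) * ‖b z - b x‖
        ≤ rexp (-‖z - x‖ ^ 2 / (2 * q ^ 2)) * (C₀ * ‖z - x‖ ^ γ) :=
          mul_le_mul_of_nonneg_left (hb_hol z x) (Real.exp_pos _).le
      _ = C₀ * (rexp (-‖z - x‖ ^ 2 / (2 * q ^ 2)) * ‖z - x‖ ^ γ) := by ring
      _ ≤ C₀ * (2 * q ^ γ * rexp (-‖z - x‖ ^ 2 / (4 * q ^ 2))) :=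
          mul_le_mul_of_nonneg_left
            (kernel_pt_bound hγ0 hγ1 hq (norm_nonneg _)) hC₀.le
      _ = (2 * C₀ * q ^ γ) * rexp (-‖z - x‖ ^ 2 / (4 * q ^ 2)) := by ring
  have hp20 : 0 < p / 2 := by positivity
  have hintb : Integrable (fun z : Euc d => (2 * C₀ * q ^ γ) * rexp (-(p/2) * ‖z - x‖ ^ 2)) :=
    ((integrable_gauss_euc hp20).comp_sub_right x).const_mul _
  have hnorm : ‖∫ z : Euc d, rexp (-p * ‖z - x‖ ^ 2) • (b z - b x)‖
      ≤ (2 * C₀ * q ^ γ) * (π / (p/2)) ^ ((d : ℝ) / 2) := by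
    calc ‖∫ z : Euc d, rexp (-p * ‖z - x‖ ^ 2) • (b z - b x)‖
        ≤ ∫ z : Euc d, (2 * C₀ * q ^ γ) * rexp (-(p/2) * ‖z - x‖ ^ 2) :=
          norm_integral_le_of_norm_le hintb (Filter.Eventually.of_forall hbound)
      _ = (2 * C₀ * q ^ γ) * (π / (p/2)) ^ ((d : ℝ) / 2) := by
          rw [integral_const_mul, gauss_int_euc x hp20]
  rw [hdiff, norm_smul, Real.norm_eq_abs, abs_of_pos hc0]
  have hfinal := mul_le_mul_of_nonneg_left hnorm hc0.le
  refine hfinal.trans (le_of_eq ?_)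
  have e1 : π / (p/2) = 2 * (π / p) := by
    rw [div_div_eq_mul_div, mul_comm π 2, mul_div_assoc]
  have e2 : (2 * (π / p)) ^ ((d : ℝ) / 2) = 2 ^ ((d : ℝ)/2) * (π / p) ^ ((d : ℝ)/2) :=
    Real.mul_rpow (by norm_num) (by positivity)
  have e3 : q ^ γ = r ^ (γ / α) := by
    rw [hqdef, ← Real.rpow_mul hr0]; congr 1; ring
  have e4 : (2:ℝ) ^ ((d : ℝ)/2 + 1) = 2 ^ ((d : ℝ)/2) * 2 := by
    rw [Real.rpow_add (by norm_num), Real.rpow_one]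
  rw [e1, e2, e3, e4]
  linear_combination (2 * C₀ * r ^ (γ/α) * (2:ℝ) ^ ((d : ℝ)/2)) * hcA

set_option maxHeartbeats 1000000 in
theorem approximate_flow_error_bound
    (d : ℕ) (hd : 1 ≤ d) (α γ C₀ : ℝ)
    (hα : α ∈ Set.Ioo (0 : ℝ) 2) (hγ : γ ∈ Set.Ioc (0 : ℝ) 1) (hC₀ : 0 < C₀)
    (b : Euc d → Euc d)
    (hb_bdd : ∀ x, ‖b x‖ ≤ C₀)
    (hb_hol : ∀ x y, ‖b x - b y‖ ≤ C₀ * ‖x - y‖ ^ γ)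
    (hbal : 1 < α + γ)
    (δ : ℝ) (hδ : δ = 1 - 1 / α + γ / α) :
    ∀ T > (0 : ℝ), ∃ C > (0 : ℝ), ∀ x : Euc d,
      ∀ υ : ℝ → Euc d, IsSol d (fun _ z => b z) x υ →
      ∀ s t : ℝ, 0 ≤ s → s ≤ t → t ≤ T →
      ∀ υs : ℝ → Euc d, IsSol d (fun τ z => moll d α b |τ - s| z) x υs →
      ‖υ t - υs t‖ ≤ C * t ^ (1 / α + δ) := by
  obtain ⟨hα0, hα2⟩ := hα
  obtain ⟨hγ0, hγ1⟩ := hγ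
  -- continuity of b
  have hb_cont : Continuous b := by
    rw [continuous_iff_continuousAt]
    intro x
    have h1 : Filter.Tendsto (fun z : Euc d => b z - b x) (nhds x) (nhds 0) := by
      apply squeeze_zero_norm (fun z => hb_hol z x)
      have h2 : Filter.Tendsto (fun z : Euc d => ‖z - x‖) (nhds x) (nhds 0) := by
        have hcn : Continuous fun z : Euc d => ‖z - x‖ := by fun_prop
        simpa using hcn.tendsto x
      have h3 : Filter.Tendsto (fun u : ℝ => C₀ * u ^ γ) (nhds 0) (nhds 0) := by
        have h4 : ContinuousAt (fun u : ℝ => u ^ γ) 0 :=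
          Real.continuousAt_rpow_const 0 γ (Or.inr hγ0.le)
        have h5 := (h4.tendsto).const_mul C₀
        simpa [Real.zero_rpow hγ0.ne'] using h5
      exact h3.comp h2
    have := h1.add_const (b x)
    simpa [ContinuousAt] using this
  intro T hT
  set K : ℝ := C₀ * 2 ^ ((d : ℝ)/2 + 1) with hK
  have hK0 : 0 < K := by positivity
  set θ : ℝ := γ * (α + γ - 1) / α with hθ
  have hθ0 : 0 < θ := div_pos (mul_pos hγ0 (by linarith)) hα0
  have hTθ : 0 < T ^ θ := Real.rpow_pos_of_pos hT _
  refine ⟨(K + C₀ * T ^ θ) * Real.exp (C₀ * T ^ θ), by positivity, ?_⟩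
  intro x υ hυ s t hs hst htT υs hυs
  have hexp : 1 / α + δ = 1 + γ / α := by rw [hδ]; ring
  have ht00 : 0 ≤ t := hs.trans hst
  rcases eq_or_lt_of_le ht00 with h0 | ht0
  · rw [← h0, hυ.1, hυs.1, sub_self, norm_zero, Real.zero_rpow]
    · simp
    · rw [hexp]; positivity
  -- main case : t > 0
  set L : ℝ := C₀ * t ^ ((γ - 1) * (1 + γ/α)) with hL
  have hL0 : 0 < L := mul_pos hC₀ (Real.rpow_pos_of_pos ht0 _)
  set ε : ℝ := K * t ^ (γ/α) + C₀ * t ^ (γ * (1 + γ/α)) with hε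
  have hε0 : 0 < ε := by
    have := Real.rpow_pos_of_pos ht0 (γ/α)
    have := Real.rpow_pos_of_pos ht0 (γ * (1 + γ/α))
    positivity
  have hder : ∀ τ ∈ Ico (0:ℝ) t, HasDerivWithinAt (fun τ => υ τ - υs τ)
      (b (υ τ) - moll d α b |τ - s| (υs τ)) (Ici τ) τ := by
    intro τ hτ
    exact ((hυ.2 τ hτ.1).sub (hυs.2 τ hτ.1)).mono (Ici_subset_Ici.2 hτ.1)
  have hcont : ContinuousOn (fun τ => υ τ - υs τ) (Icc 0 t) := by
    intro τ hτ
    exact (((hυ.2 τ hτ.1).sub (hυs.2 τ hτ.1)).continuousWithinAt).mono Icc_subset_Ici_self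
  have hbound : ∀ τ ∈ Ico (0:ℝ) t,
      ‖b (υ τ) - moll d α b |τ - s| (υs τ)‖ ≤ L * ‖υ τ - υs τ‖ + ε := by
    intro τ hτ
    have htri : ‖b (υ τ) - moll d α b |τ - s| (υs τ)‖
        ≤ ‖b (υ τ) - b (υs τ)‖ + ‖b (υs τ) - moll d α b |τ - s| (υs τ)‖ :=
      norm_sub_le_norm_sub_add_norm_sub _ _ _
    have h1 : ‖b (υ τ) - b (υs τ)‖ ≤ C₀ * ‖υ τ - υs τ‖ ^ γ := hb_hol _ _
    have habs : |τ - s| ≤ t := by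
      rw [abs_le]; constructor <;> [linarith [hτ.1]; linarith [hτ.2.le]]
    have h2 : ‖b (υs τ) - moll d α b |τ - s| (υs τ)‖ ≤ K * t ^ (γ/α) := by
      rw [norm_sub_rev]
      refine (moll_err hα0 hγ0 hγ1 hC₀ hb_cont hb_bdd hb_hol (abs_nonneg _) (υs τ)).trans ?_
      rw [← hK]
      exact mul_le_mul_of_nonneg_left
        (Real.rpow_le_rpow (abs_nonneg _) habs (by positivity)) hK0.le
    -- bound the Hölder term linearly
    have hlam : (0:ℝ) < t ^ (1 + γ/α) := Real.rpow_pos_of_pos ht0 _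
    have h3 : ‖υ τ - υs τ‖ ^ γ
        ≤ (t ^ (1 + γ/α)) ^ γ + (t ^ (1 + γ/α)) ^ (γ - 1) * ‖υ τ - υs τ‖ :=
      rpow_le_add_aux hγ0 hγ1 hlam (norm_nonneg _)
    have e1 : (t ^ (1 + γ/α)) ^ γ = t ^ (γ * (1 + γ/α)) := by
      rw [← Real.rpow_mul ht0.le]; congr 1; ring
    have e2 : (t ^ (1 + γ/α)) ^ (γ - 1) = t ^ ((γ - 1) * (1 + γ/α)) := by
      rw [← Real.rpow_mul ht0.le]; congr 1; ring
    rw [e1, e2] at h3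
    have h4 : C₀ * ‖υ τ - υs τ‖ ^ γ
        ≤ C₀ * t ^ (γ * (1 + γ/α)) + L * ‖υ τ - υs τ‖ := by
      have := mul_le_mul_of_nonneg_left h3 hC₀.le
      rw [hL]; nlinarith [this]
    calc ‖b (υ τ) - moll d α b |τ - s| (υs τ)‖
        ≤ C₀ * ‖υ τ - υs τ‖ ^ γ + K * t ^ (γ/α) := by linarith
      _ ≤ L * ‖υ τ - υs τ‖ + ε := by rw [hε]; linarith
  have hzero : ‖(fun τ => υ τ - υs τ) 0‖ ≤ 0 := by
    simp [hυ.1, hυs.1]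
  have hmain := norm_le_gronwallBound_of_norm_deriv_right_le hcont hder hzero hbound t
    (right_mem_Icc.2 ht00)
  -- bound the Gronwall bound
  have hgb : gronwallBound 0 L ε (t - 0) ≤ ε * t * Real.exp (L * t) := by
    rw [sub_zero, gronwallBound_of_K_ne_0 hL0.ne']
    have h5 : Real.exp (L * t) - 1 ≤ L * t * Real.exp (L * t) := by
      have h6 := Real.add_one_le_exp (-(L * t))
      rw [Real.exp_neg] at h6
      have h7 := Real.exp_pos (L * t)
      have h8 : (1 - L * t) * Real.exp (L * t) ≤ 1 := by
        rw [sub_mul]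
        nlinarith [mul_le_mul_of_nonneg_right h6 h7.le,
          mul_inv_cancel₀ h7.ne']
      nlinarith
    have h9 : ε / L * (Real.exp (L * t) - 1) ≤ ε / L * (L * t * Real.exp (L * t)) :=
      mul_le_mul_of_nonneg_left h5 (by positivity)
    calc (0:ℝ) * Real.exp (L * t) + ε / L * (Real.exp (L * t) - 1)
        = ε / L * (Real.exp (L * t) - 1) := by ring
      _ ≤ ε / L * (L * t * Real.exp (L * t)) := h9
      _ = ε * t * Real.exp (L * t) := by field_simp
  have htθt : t ^ θ ≤ T ^ θ := Real.rpow_le_rpow ht0.le htT hθ0.le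
  have hLt : L * t = C₀ * t ^ θ := by
    rw [hL, mul_assoc, ← Real.rpow_add_one ht0.ne']
    congr 1
    rw [hθ]; field_simp; ring
  have hLtT : L * t ≤ C₀ * T ^ θ := by
    rw [hLt]; exact mul_le_mul_of_nonneg_left htθt hC₀.le
  have hεt : ε * t ≤ (K + C₀ * T ^ θ) * t ^ (1 + γ/α) := by
    have ea : t ^ (γ/α) * t = t ^ (1 + γ/α) := by
      rw [← Real.rpow_add_one ht0.ne']; congr 1; ring
    have eb : t ^ (γ * (1 + γ/α)) * t = t ^ (1 + γ/α) * t ^ θ := by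
      rw [← Real.rpow_add_one ht0.ne', ← Real.rpow_add ht0]
      congr 1
      rw [hθ]; field_simp; ring
    have ec : t ^ (1 + γ/α) * t ^ θ ≤ t ^ (1 + γ/α) * T ^ θ :=
      mul_le_mul_of_nonneg_left htθt (Real.rpow_pos_of_pos ht0 _).le
    calc ε * t = K * (t ^ (γ/α) * t) + C₀ * (t ^ (γ * (1 + γ/α)) * t) := by
          rw [hε]; ring
      _ = K * t ^ (1 + γ/α) + C₀ * (t ^ (1 + γ/α) * t ^ θ) := by rw [ea, eb]
      _ ≤ K * t ^ (1 + γ/α) + C₀ * (t ^ (1 + γ/α) * T ^ θ) := by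
          have := mul_le_mul_of_nonneg_left ec hC₀.le
          linarith
      _ = (K + C₀ * T ^ θ) * t ^ (1 + γ/α) := by ring
  have hfin : ‖υ t - υs t‖ ≤ ε * t * Real.exp (L * t) := le_trans hmain hgb
  have hfin2 : ε * t * Real.exp (L * t)
      ≤ (K + C₀ * T ^ θ) * t ^ (1 + γ/α) * Real.exp (C₀ * T ^ θ) := by
    have h10 : Real.exp (L * t) ≤ Real.exp (C₀ * T ^ θ) := Real.exp_le_exp.2 hLtT
    have h11 : 0 ≤ ε * t := by positivity
    have h12 : 0 ≤ (K + C₀ * T ^ θ) * t ^ (1 + γ/α) := by positivity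
    exact mul_le_mul hεt h10 (Real.exp_pos _).le h12
  rw [hexp]
  calc ‖υ t - υs t‖ ≤ (K + C₀ * T ^ θ) * t ^ (1 + γ/α) * Real.exp (C₀ * T ^ θ) :=
        le_trans hfin hfin2
    _ = (K + C₀ * T ^ θ) * Real.exp (C₀ * T ^ θ) * t ^ (1 + γ/α) := by ring
end

section
/- Assume the balance condition α + γ > 1 and set δ = 1 − 1/α + γ/α > 0. For every T > 0 there exists C > 0 such that for all t ∈ [0,T], all s, r ∈ [0,t], and all x, y ∈ ℝ^d, one has |υ_t^s(x) − υ_t^r(x)| ≤ C t^{1/α + δ} and |θ_t^s(y) − θ_t^r(y)| ≤ C t^{1/α + δ}. -/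
open MeasureTheory Real Set

section Aux

variable {d : ℕ} {α γ C₀ : ℝ} {b : Euc d → Euc d}

lemma cont_of_holder (hγ : 0 < γ) (hb_hol : ∀ x y, ‖b x - b y‖ ≤ C₀ * ‖x - y‖ ^ γ) :
    Continuous b := by
  rw [continuous_iff_continuousAt]
  intro x
  rw [ContinuousAt, tendsto_iff_norm_sub_tendsto_zero]
  have h0 : Filter.Tendsto (fun y : Euc d => ‖y - x‖) (nhds x) (nhds 0) := by
    have := (continuous_id.sub (continuous_const (y := x))).norm.tendsto x
    simpa using this
  have h1 : Filter.Tendsto (fun y : Euc d => C₀ * ‖y - x‖ ^ γ) (nhds x) (nhds 0) := by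
    have hc : ContinuousAt (fun r : ℝ => C₀ * r ^ γ) 0 :=
      (continuousAt_const.mul (Real.continuousAt_rpow_const 0 γ (Or.inr hγ.le)))
    have := hc.tendsto.comp h0
    simpa [Function.comp_def, Real.zero_rpow hγ.ne'] using this
  exact squeeze_zero_norm (fun y => by simpa using hb_hol y x) h1

lemma integrable_gauss (a : ℝ) (ha : 0 < a) :
    Integrable (fun z : Euc d => rexp (-a * ‖z‖ ^ 2)) := by
  have h := (GaussianFourier.integrable_cexp_neg_mul_sq_norm_add (V := Euc d)
      (b := (a : ℂ)) (by simpa using ha) 0 0).norm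
  refine h.congr (Filter.Eventually.of_forall fun z => ?_)
  simp only [Complex.norm_exp]
  norm_num
  left
  norm_cast

lemma gauss_integral_val :
    ∫ u : Euc d, rexp (-(1/2) * ‖u‖ ^ 2) = (2 * π) ^ ((d : ℝ) / 2) := by
  have h := GaussianFourier.integral_rexp_neg_mul_sq_norm (V := Euc d)
      (b := 1/2) (by norm_num)
  rw [h, finrank_euclideanSpace_fin]
  congr 1
  rw [div_div_eq_mul_div, mul_comm]
  norm_num

end Aux

section Aux2

variable {d : ℕ} {α γ C₀ : ℝ} {b : Euc d → Euc d}

lemma gauss_cont (a : ℝ) : Continuous (fun u : Euc d => rexp (a * ‖u‖ ^ 2)) :=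
  Real.continuous_exp.comp (continuous_const.mul ((continuous_norm).pow 2))

lemma integrand_integrable (hb_cont : Continuous b) (hb_bdd : ∀ x, ‖b x‖ ≤ C₀)
    (g : Euc d → Euc d) (hg : Continuous g) :
    Integrable (fun u : Euc d => rexp (-(1/2) * ‖u‖ ^ 2) • b (g u)) := by
  refine Integrable.mono' ((integrable_gauss (1/2) (by norm_num)).const_mul C₀) ?_
    (Filter.Eventually.of_forall fun u => ?_)
  · exact ((gauss_cont (-(1/2))).smul (hb_cont.comp hg)).aestronglyMeasurable
  · rw [norm_smul, Real.norm_eq_abs, abs_of_pos (Real.exp_pos _), mul_comm]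
    exact mul_le_mul_of_nonneg_right (hb_bdd _) (Real.exp_pos _).le

set_option maxHeartbeats 1000000 in
lemma moll_repr (hα : 0 < α) {t : ℝ} (ht : 0 < t) (x : Euc d) :
    moll d α b t x = (2 * π) ^ (-(d : ℝ) / 2) •
      ∫ u : Euc d, rexp (-(1/2) * ‖u‖ ^ 2) • b (t ^ (1/α) • u + x) := by
  set σ := t ^ (1/α) with hσdef
  have hσ : 0 < σ := Real.rpow_pos_of_pos ht _
  have hσ2 : t ^ (2/α) = σ ^ 2 := by
    rw [hσdef, ← Real.rpow_natCast (t ^ (1/α)) 2, ← Real.rpow_mul ht.le]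
    congr 1
    push_cast
    ring
  rw [moll, if_neg (not_le.mpr ht)]
  have step1 : (∫ z : Euc d, rexp (-‖z - x‖ ^ 2 / (2 * t ^ (2/α))) • b z)
      = ∫ z : Euc d, rexp (-(1/(2 * σ^2)) * ‖z‖ ^ 2) • b (z + x) := by
    rw [← integral_add_right_eq_self
      (fun z : Euc d => rexp (-‖z - x‖ ^ 2 / (2 * t ^ (2/α))) • b z) x]
    congr 1; funext z
    rw [add_sub_cancel_right, hσ2]
    congr 2
    ring
  have step2 : (∫ z : Euc d, rexp (-(1/(2 * σ^2)) * ‖z‖ ^ 2) • b (z + x))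
      = (σ ^ Module.finrank ℝ (Euc d) : ℝ) •
        ∫ u : Euc d, rexp (-(1/2) * ‖u‖ ^ 2) • b (t ^ (1/α) • u + x) := by
    rw [← MeasureTheory.Measure.integral_comp_inv_smul_of_nonneg (volume)
      (fun u : Euc d => rexp (-(1/2) * ‖u‖ ^ 2) • b (t ^ (1/α) • u + x)) hσ.le]
    congr 1; funext z
    rw [smul_inv_smul₀ hσ.ne']
    congr 2
    rw [norm_smul, Real.norm_eq_abs, abs_of_nonneg (inv_nonneg.mpr hσ.le), mul_pow]
    field_simp
  rw [step1, step2, smul_smul, finrank_euclideanSpace_fin]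
  congr 1
  rw [hσdef, ← Real.rpow_natCast (t ^ (1/α)) d, ← Real.rpow_mul ht.le, mul_assoc,
    ← Real.rpow_add ht]
  rw [show -(d : ℝ)/α + 1/α * d = 0 by ring, Real.rpow_zero, mul_one]

end Aux2

section Aux3

variable {d : ℕ} {α γ C₀ : ℝ} {b : Euc d → Euc d}

noncomputable def Mgam (d : ℕ) (γ : ℝ) : ℝ :=
  (2 * π) ^ (-(d : ℝ) / 2) * ∫ u : Euc d, rexp (-(1/2) * ‖u‖ ^ 2) * ‖u‖ ^ γ

lemma Mgam_nonneg : 0 ≤ Mgam d γ := by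
  apply mul_nonneg (Real.rpow_nonneg (by positivity) _)
  apply integral_nonneg
  intro u
  positivity

lemma integrable_moment (hγ0 : 0 < γ) (hγ1 : γ ≤ 1) :
    Integrable (fun u : Euc d => rexp (-(1/2) * ‖u‖ ^ 2) * ‖u‖ ^ γ) := by
  refine Integrable.mono' (((integrable_gauss (d := d) (1/4) (by norm_num)).const_mul
      (rexp 1))) ?_ (Filter.Eventually.of_forall fun u => ?_)
  · exact ((gauss_cont (-(1/2))).mul
      (continuous_norm.rpow_const fun u => Or.inr hγ0.le)).aestronglyMeasurable
  · set r := ‖u‖ with hr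
    have hr0 : 0 ≤ r := norm_nonneg u
    have h1 : r ^ γ ≤ 1 + r := by
      rcases le_or_gt r 1 with h | h
      · calc r ^ γ ≤ 1 := Real.rpow_le_one hr0 h hγ0.le
          _ ≤ 1 + r := by linarith
      · calc r ^ γ ≤ r ^ (1:ℝ) := Real.rpow_le_rpow_of_exponent_le h.le hγ1
          _ = r := Real.rpow_one r
          _ ≤ 1 + r := by linarith
    have h2 : (1 : ℝ) + r ≤ rexp r := by
      have := Real.add_one_le_exp r
      linarith
    rw [Real.norm_eq_abs, abs_of_nonneg (by positivity)]
    calc rexp (-(1/2) * r ^ 2) * r ^ γ ≤ rexp (-(1/2) * r ^ 2) * rexp r := by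
          apply mul_le_mul_of_nonneg_left (h1.trans h2) (Real.exp_pos _).le
      _ = rexp (-(1/2) * r ^ 2 + r) := by rw [← Real.exp_add]
      _ ≤ rexp (1 + -(1/4) * r ^ 2) := by
          apply Real.exp_le_exp.mpr
          nlinarith [sq_nonneg (r - 2)]
      _ = rexp 1 * rexp (-(1/4) * r ^ 2) := by rw [Real.exp_add]

end Aux3

section Aux4

variable {d : ℕ} {α γ C₀ : ℝ} {b : Euc d → Euc d}

lemma two_pi_cancel : (2 * π) ^ (-(d : ℝ) / 2) * (2 * π) ^ ((d : ℝ) / 2) = 1 := by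
  rw [← Real.rpow_add (by positivity), show -(d:ℝ)/2 + (d:ℝ)/2 = 0 by ring, Real.rpow_zero]

lemma moll_norm_le (hα : 0 < α) (hC₀ : 0 ≤ C₀) (hb_cont : Continuous b)
    (hb_bdd : ∀ x, ‖b x‖ ≤ C₀) (t : ℝ) (x : Euc d) : ‖moll d α b t x‖ ≤ C₀ := by
  rcases le_or_gt t 0 with ht | ht
  · rw [moll, if_pos ht]; exact hb_bdd x
  · rw [moll_repr hα ht x, norm_smul, Real.norm_eq_abs,
      abs_of_nonneg (Real.rpow_nonneg (by positivity) _)]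
    have hb1 : ‖∫ u : Euc d, rexp (-(1/2) * ‖u‖ ^ 2) • b (t ^ (1/α) • u + x)‖
        ≤ ∫ u : Euc d, C₀ * rexp (-(1/2) * ‖u‖ ^ 2) := by
      refine norm_integral_le_of_norm_le ((integrable_gauss (1/2) (by norm_num)).const_mul C₀)
        (Filter.Eventually.of_forall fun u => ?_)
      rw [norm_smul, Real.norm_eq_abs, abs_of_pos (Real.exp_pos _), mul_comm]
      exact mul_le_mul_of_nonneg_right (hb_bdd _) (Real.exp_pos _).le
    calc (2 * π) ^ (-(d : ℝ) / 2) * ‖_‖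
        ≤ (2 * π) ^ (-(d : ℝ) / 2) * ∫ u : Euc d, C₀ * rexp (-(1/2) * ‖u‖ ^ 2) :=
          mul_le_mul_of_nonneg_left hb1 (Real.rpow_nonneg (by positivity) _)
      _ = (2 * π) ^ (-(d : ℝ) / 2) * (C₀ * (2 * π) ^ ((d : ℝ) / 2)) := by
          rw [integral_const_mul, gauss_integral_val]
      _ = C₀ := by
          rw [mul_comm C₀, ← mul_assoc, two_pi_cancel, one_mul]

lemma moll_holder (hα : 0 < α) (hγ0 : 0 < γ) (hC₀ : 0 ≤ C₀) (hb_cont : Continuous b)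
    (hb_bdd : ∀ x, ‖b x‖ ≤ C₀) (hb_hol : ∀ x y, ‖b x - b y‖ ≤ C₀ * ‖x - y‖ ^ γ)
    (t : ℝ) (x y : Euc d) :
    ‖moll d α b t x - moll d α b t y‖ ≤ C₀ * ‖x - y‖ ^ γ := by
  rcases le_or_gt t 0 with ht | ht
  · rw [moll, moll, if_pos ht, if_pos ht]; exact hb_hol x y
  · rw [moll_repr hα ht x, moll_repr hα ht y, ← smul_sub,
      ← integral_sub (integrand_integrable hb_cont hb_bdd
          (fun u => t ^ (1/α) • u + x) (by fun_prop))
        (integrand_integrable hb_cont hb_bdd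
          (fun u => t ^ (1/α) • u + y) (by fun_prop))]
    simp_rw [← smul_sub]
    rw [norm_smul, Real.norm_eq_abs, abs_of_nonneg (Real.rpow_nonneg (by positivity) _)]
    have hb1 : ‖∫ u : Euc d, rexp (-(1/2) * ‖u‖ ^ 2) • (b (t ^ (1/α) • u + x) - b (t ^ (1/α) • u + y))‖
        ≤ ∫ u : Euc d, (C₀ * ‖x - y‖ ^ γ) * rexp (-(1/2) * ‖u‖ ^ 2) := by
      refine norm_integral_le_of_norm_le ((integrable_gauss (1/2) (by norm_num)).const_mul _)
        (Filter.Eventually.of_forall fun u => ?_)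
      rw [norm_smul, Real.norm_eq_abs, abs_of_pos (Real.exp_pos _), mul_comm]
      apply mul_le_mul_of_nonneg_right _ (Real.exp_pos _).le
      have := hb_hol (t ^ (1/α) • u + x) (t ^ (1/α) • u + y)
      rwa [add_sub_add_left_eq_sub] at this
    calc (2 * π) ^ (-(d : ℝ) / 2) * ‖_‖
        ≤ (2 * π) ^ (-(d : ℝ) / 2) * ∫ u : Euc d, (C₀ * ‖x - y‖ ^ γ) * rexp (-(1/2) * ‖u‖ ^ 2) :=
          mul_le_mul_of_nonneg_left hb1 (Real.rpow_nonneg (by positivity) _)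
      _ = (2 * π) ^ (-(d : ℝ) / 2) * ((C₀ * ‖x - y‖ ^ γ) * (2 * π) ^ ((d : ℝ) / 2)) := by
          rw [integral_const_mul, gauss_integral_val]
      _ = C₀ * ‖x - y‖ ^ γ := by
          rw [mul_comm (C₀ * ‖x - y‖ ^ γ), ← mul_assoc, two_pi_cancel, one_mul]

end Aux4

section Aux5

variable {d : ℕ} {α γ C₀ : ℝ} {b : Euc d → Euc d}

lemma moll_close (hα : 0 < α) (hγ0 : 0 < γ) (hγ1 : γ ≤ 1) (hC₀ : 0 ≤ C₀)
    (hb_cont : Continuous b) (hb_bdd : ∀ x, ‖b x‖ ≤ C₀)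
    (hb_hol : ∀ x y, ‖b x - b y‖ ≤ C₀ * ‖x - y‖ ^ γ)
    {t : ℝ} (ht : 0 ≤ t) (x : Euc d) :
    ‖moll d α b t x - b x‖ ≤ (Mgam d γ * C₀) * t ^ (γ / α) := by
  rcases eq_or_lt_of_le ht with ht0 | ht0
  · rw [moll, if_pos ht0.symm.le, sub_self, norm_zero]
    have := Mgam_nonneg (d := d) (γ := γ)
    positivity
  · have hσ0 : 0 < t ^ (1/α) := Real.rpow_pos_of_pos ht0 _
    have hσγ : (t ^ (1/α)) ^ γ = t ^ (γ / α) := by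
      rw [← Real.rpow_mul ht, show 1/α * γ = γ/α by ring]
    have hbx : (2 * π) ^ (-(d:ℝ)/2) • ∫ _u : Euc d, rexp (-(1/2) * ‖_u‖ ^ 2) • b x = b x := by
      rw [integral_smul_const, gauss_integral_val, smul_smul, two_pi_cancel, one_smul]
    rw [moll_repr hα ht0 x, ← hbx, ← smul_sub,
      ← integral_sub (integrand_integrable hb_cont hb_bdd
          (fun u => t ^ (1/α) • u + x) (by fun_prop))
        (integrand_integrable hb_cont hb_bdd (fun _ => x) continuous_const)]
    simp_rw [← smul_sub]
    rw [norm_smul, Real.norm_eq_abs, abs_of_nonneg (Real.rpow_nonneg (by positivity) _)]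
    have hb1 : ‖∫ u : Euc d, rexp (-(1/2) * ‖u‖ ^ 2) • (b (t ^ (1/α) • u + x) - b x)‖
        ≤ ∫ u : Euc d, (C₀ * t ^ (γ / α)) * (rexp (-(1/2) * ‖u‖ ^ 2) * ‖u‖ ^ γ) := by
      refine norm_integral_le_of_norm_le ((integrable_moment hγ0 hγ1).const_mul _)
        (Filter.Eventually.of_forall fun u => ?_)
      rw [norm_smul, Real.norm_eq_abs, abs_of_pos (Real.exp_pos _)]
      have h1 : ‖b (t ^ (1/α) • u + x) - b x‖ ≤ C₀ * (t ^ (γ/α) * ‖u‖ ^ γ) := by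
        have h2 := hb_hol (t ^ (1/α) • u + x) x
        rw [add_sub_cancel_right, norm_smul, Real.norm_eq_abs, abs_of_pos hσ0,
          Real.mul_rpow hσ0.le (norm_nonneg u), hσγ] at h2
        linarith [h2]
      calc rexp (-(1/2) * ‖u‖ ^ 2) * ‖b (t ^ (1/α) • u + x) - b x‖
          ≤ rexp (-(1/2) * ‖u‖ ^ 2) * (C₀ * (t ^ (γ/α) * ‖u‖ ^ γ)) :=
            mul_le_mul_of_nonneg_left h1 (Real.exp_pos _).le
        _ = (C₀ * t ^ (γ / α)) * (rexp (-(1/2) * ‖u‖ ^ 2) * ‖u‖ ^ γ) := by ring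
    calc (2 * π) ^ (-(d : ℝ) / 2) * ‖_‖
        ≤ (2 * π) ^ (-(d : ℝ) / 2)
            * ∫ u : Euc d, (C₀ * t ^ (γ / α)) * (rexp (-(1/2) * ‖u‖ ^ 2) * ‖u‖ ^ γ) :=
          mul_le_mul_of_nonneg_left hb1 (Real.rpow_nonneg (by positivity) _)
      _ = (2 * π) ^ (-(d : ℝ) / 2)
            * ((C₀ * t ^ (γ / α)) * ∫ u : Euc d, rexp (-(1/2) * ‖u‖ ^ 2) * ‖u‖ ^ γ) := by
          rw [integral_const_mul]
      _ = (Mgam d γ * C₀) * t ^ (γ / α) := by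
          rw [Mgam]; ring

lemma moll_neg (t : ℝ) (x : Euc d) :
    moll d α (fun y => -(b y)) t x = - moll d α b t x := by
  unfold moll
  split_ifs with h
  · rfl
  · simp only [smul_neg, integral_neg, neg_smul]

end Aux5

section ODE

variable {d : ℕ} {α γ C₀ : ℝ} {b : Euc d → Euc d}

lemma sol_dist_le {F1 F2 : ℝ → Euc d → Euc d} {x : Euc d} {us ur : ℝ → Euc d}
    (h1 : IsSol d F1 x us) (h2 : IsSol d F2 x ur) {t : ℝ} (ht : 0 ≤ t)
    {c1 c2 p : ℝ} (hc2 : 0 ≤ c2) (hp : 0 < p)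
    (hbound : ∀ τ ∈ Ico (0:ℝ) t, ‖F1 τ (us τ) - F2 τ (ur τ)‖ ≤ c1 + c2 * τ ^ p) :
    ∀ τ ∈ Icc (0:ℝ) t, ‖us τ - ur τ‖ ≤ c1 * τ + (c2 / (p+1)) * τ ^ (p+1) := by
  set f : ℝ → Euc d := fun τ => us τ - ur τ with hf
  have hf' : ∀ τ ∈ Ico (0:ℝ) t, HasDerivWithinAt f
      (F1 τ (us τ) - F2 τ (ur τ)) (Ici τ) τ := fun τ hτ =>
    ((h1.2 τ hτ.1).sub (h2.2 τ hτ.1)).mono (Ici_subset_Ici.mpr hτ.1)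
  have hfc : ContinuousOn f (Icc (0:ℝ) t) := fun τ hτ =>
    (((h1.2 τ hτ.1).sub (h2.2 τ hτ.1)).continuousWithinAt).mono Icc_subset_Ici_self
  have hB' : ∀ τ ∈ Ico (0:ℝ) t, HasDerivWithinAt
      (fun u : ℝ => c1 * u + (c2 / (p+1)) * u ^ (p+1)) (c1 + c2 * τ ^ p) (Ici τ) τ := by
    intro τ hτ
    have hd1 : HasDerivAt (fun u : ℝ => c1 * u) (c1 * 1) τ := (hasDerivAt_id τ).const_mul c1
    have hd2 : HasDerivAt (fun u : ℝ => u ^ (p+1)) ((p+1) * τ ^ p) τ := by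
      have := Real.hasDerivAt_rpow_const (x := τ) (p := p+1) (Or.inr (by linarith))
      simpa using this
    have hd3 := hd1.add (hd2.const_mul (c2 / (p+1)))
    have heq : c1 * 1 + c2 / (p+1) * ((p+1) * τ ^ p) = c1 + c2 * τ ^ p := by
      field_simp
    rw [heq] at hd3
    exact hd3.hasDerivWithinAt
  have hBc : ContinuousOn (fun u : ℝ => c1 * u + (c2 / (p+1)) * u ^ (p+1)) (Icc (0:ℝ) t) := by
    apply Continuous.continuousOn
    exact (continuous_const.mul continuous_id).add
      (continuous_const.mul (continuous_id.rpow_const fun _ => Or.inr (by linarith)))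
  have ha : ‖f 0‖ ≤ c1 * 0 + (c2 / (p+1)) * (0:ℝ) ^ (p+1) := by
    rw [hf]
    simp only [h1.1, h2.1, sub_self, norm_zero]
    rw [Real.zero_rpow (by linarith)]
    norm_num
  exact fun τ hτ => image_norm_le_of_norm_deriv_right_le_deriv_boundary'
    hfc hf' ha hBc hB' hbound hτ

end ODE

section Eseq

noncomputable def eseq (α γ : ℝ) : ℕ → ℝ
  | 0 => 1
  | n+1 => min (1 + γ/α) (1 + γ * eseq α γ n)

variable {α γ : ℝ}

lemma eseq_zero : eseq α γ 0 = 1 := rfl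

lemma eseq_succ (n : ℕ) : eseq α γ (n+1) = min (1 + γ/α) (1 + γ * eseq α γ n) := rfl

lemma eseq_ge_one (hq : 0 ≤ γ/α) (hγ : 0 ≤ γ) : ∀ n, 1 ≤ eseq α γ n
  | 0 => le_refl 1
  | n+1 => by
      rw [eseq_succ]
      refine le_min (by linarith) ?_
      have h := eseq_ge_one hq hγ n
      nlinarith

lemma eseq_le (hq : 0 ≤ γ/α) (n : ℕ) : eseq α γ n ≤ 1 + γ/α := by
  cases n with
  | zero => rw [eseq_zero]; linarith
  | succ n => rw [eseq_succ]; exact min_le_left _ _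

lemma rpow_absorb {T t a c : ℝ} (hT : 0 < T) (ht0 : 0 ≤ t) (htT : t ≤ T)
    (hc0 : 0 ≤ c) (hca : c ≤ a) : t ^ a ≤ T ^ (a - c) * t ^ c := by
  rcases eq_or_lt_of_le ht0 with h0 | h0
  · rcases eq_or_lt_of_le hc0 with hc | hc
    · rw [← hc, ← h0, Real.rpow_zero, mul_one, sub_zero]
      exact Real.rpow_le_rpow le_rfl hT.le (by linarith)
    · rw [← h0, Real.zero_rpow (by linarith : a ≠ 0), Real.zero_rpow hc.ne', mul_zero]
  · calc t ^ a = t ^ (a - c) * t ^ c := by rw [← Real.rpow_add h0, sub_add_cancel]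
      _ ≤ T ^ (a - c) * t ^ c :=
        mul_le_mul_of_nonneg_right (Real.rpow_le_rpow h0.le htT (by linarith))
          (Real.rpow_nonneg ht0 _)

lemma eseq_reaches (hα : 0 < α) (hγ0 : 0 < γ) (hγ1 : γ ≤ 1) (hbal : 1 < α + γ) :
    ∃ N, eseq α γ N = 1 + γ/α := by
  have hα' := hα.ne'
  have hstar : 1/α ≤ 1 + γ/α := by
    rw [div_le_iff₀ hα, add_mul, div_mul_cancel₀ _ hα'] at *
    linarith
  have hε : 0 < 1 - (1-γ)/α := by
    rw [sub_pos, div_lt_one hα]; linarith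
  set ε := 1 - (1-γ)/α with hεdef
  clear_value ε
  have hgood : ∀ m, 1/α ≤ eseq α γ m → 1/α ≤ eseq α γ (m+1) := by
    intro m hm
    rw [eseq_succ]
    refine le_min hstar ?_
    have h1 : γ * (1/α) ≤ γ * eseq α γ m := mul_le_mul_of_nonneg_left hm hγ0.le
    have h2 : γ * (1/α) = γ/α := by ring
    linarith
  have key : ∀ n : ℕ, 1/α ≤ eseq α γ n ∨ 1 + (n:ℝ) * ε ≤ eseq α γ n := by
    intro n
    induction n with
    | zero => right; rw [eseq_zero]; norm_num
    | succ n ih =>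
      rcases le_or_gt (1/α) (eseq α γ n) with h' | h'
      · left; exact hgood n h'
      · rcases ih with h | h
        · exact absurd h (not_le.mpr h')
        · rcases le_or_gt (1 + γ/α) (1 + γ * eseq α γ n) with hmin | hmin
          · left
            rw [eseq_succ, min_eq_left hmin]
            exact hstar
          · right
            rw [eseq_succ, min_eq_right hmin.le]
            have h2 : (1-γ) * eseq α γ n ≤ (1-γ) * (1/α) :=
              mul_le_mul_of_nonneg_left h'.le (by linarith)
            have h6 : (1-γ) * (1/α) = 1 - ε := by rw [hεdef]; ring
            push_cast
            linarith
  obtain ⟨n, hn⟩ := exists_nat_ge ((1/α - 1)/ε)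
  have hn1 : 1/α ≤ 1 + (n:ℝ) * ε := by
    rw [div_le_iff₀ hε] at hn
    linarith
  have h3 : 1/α ≤ eseq α γ n := by
    rcases key n with h | h
    · exact h
    · exact hn1.trans h
  refine ⟨n+1, ?_⟩
  rw [eseq_succ]
  apply min_eq_left
  have h4 : γ * (1/α) ≤ γ * eseq α γ n := mul_le_mul_of_nonneg_left h3 hγ0.le
  have h5 : γ * (1/α) = γ/α := by ring
  linarith

end Eseq

section Boot

variable {d : ℕ} {α γ C₀ : ℝ} {b : Euc d → Euc d}

lemma bootstrap (hα : 0 < α) (hγ0 : 0 < γ) (hγ1 : γ ≤ 1) (hC₀ : 0 < C₀)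
    (hb_cont : Continuous b) (hb_bdd : ∀ x, ‖b x‖ ≤ C₀)
    (hb_hol : ∀ x y, ‖b x - b y‖ ≤ C₀ * ‖x - y‖ ^ γ)
    {T : ℝ} (hT : 0 < T) (n : ℕ) :
    ∃ K : ℝ, 0 < K ∧ ∀ t ∈ Icc (0:ℝ) T, ∀ s ∈ Icc (0:ℝ) t, ∀ r ∈ Icc (0:ℝ) t,
      ∀ (x : Euc d) (us ur : ℝ → Euc d),
      IsSol d (fun τ z => moll d α b |τ - s| z) x us →
      IsSol d (fun τ z => moll d α b |τ - r| z) x ur →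
      ∀ τ ∈ Icc (0:ℝ) t, ‖us τ - ur τ‖ ≤ K * τ * t ^ (eseq α γ n - 1) := by
  have hq : 0 ≤ γ/α := (div_pos hγ0 hα).le
  induction n with
  | zero =>
    refine ⟨2*C₀ + 1, by linarith, ?_⟩
    rintro t ⟨ht0, htT⟩ s hs r hr x us ur h1 h2 τ hτ
    have hbnd : ∀ u ∈ Ico (0:ℝ) t,
        ‖moll d α b |u - s| (us u) - moll d α b |u - r| (ur u)‖
          ≤ 2*C₀ + 0 * u ^ (1:ℝ) := by
      intro u _hu
      have e1 := moll_norm_le hα hC₀.le hb_cont hb_bdd |u - s| (us u)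
      have e2 := moll_norm_le hα hC₀.le hb_cont hb_bdd |u - r| (ur u)
      calc ‖moll d α b |u - s| (us u) - moll d α b |u - r| (ur u)‖
          ≤ ‖moll d α b |u - s| (us u)‖ + ‖moll d α b |u - r| (ur u)‖ := norm_sub_le _ _
        _ ≤ 2*C₀ + 0 * u ^ (1:ℝ) := by rw [zero_mul]; linarith
    have hmain := sol_dist_le h1 h2 ht0 le_rfl one_pos hbnd τ hτ
    rw [eseq_zero, sub_self, Real.rpow_zero, mul_one]
    have hτ0 := hτ.1
    calc ‖us τ - ur τ‖ ≤ 2*C₀ * τ + ((0:ℝ)/(1+1)) * τ^((1:ℝ)+1) := hmain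
      _ = 2*C₀*τ := by norm_num
      _ ≤ (2*C₀+1) * τ := by nlinarith
  | succ n ih =>
    obtain ⟨K, hK, IH⟩ := ih
    have he1 : 1 ≤ eseq α γ n := eseq_ge_one hq hγ0.le n
    have he'1 : 1 ≤ eseq α γ (n+1) := eseq_ge_one hq hγ0.le (n+1)
    have he'le1 : eseq α γ (n+1) ≤ 1 + γ/α := eseq_le hq (n+1)
    have he'le2 : eseq α γ (n+1) ≤ 1 + γ * eseq α γ n := by
      rw [eseq_succ]; exact min_le_right _ _
    set e : ℝ := eseq α γ n with hedef
    set e' : ℝ := eseq α γ (n+1) with he'def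
    have hM : 0 ≤ Mgam d γ := Mgam_nonneg
    set A : ℝ := 2*(Mgam d γ*C₀)*T^(γ/α - (e'-1)) with hAdef
    set B : ℝ := (C₀*K^γ/(γ+1))*T^(γ*e - (e'-1)) with hBdef
    have hA0 : 0 ≤ A := by
      apply mul_nonneg (by nlinarith [mul_nonneg hM hC₀.le]) (Real.rpow_nonneg hT.le _)
    have hB0 : 0 ≤ B := by
      apply mul_nonneg (div_nonneg (mul_nonneg hC₀.le (Real.rpow_nonneg hK.le _))
        (by linarith)) (Real.rpow_nonneg hT.le _)
    refine ⟨A + B + 1, by linarith, ?_⟩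
    rintro t ⟨ht0, htT⟩ s hs r hr x us ur h1 h2 τ hτ
    have hc2 : 0 ≤ C₀*(K*t^(e-1))^γ :=
      mul_nonneg hC₀.le (Real.rpow_nonneg (mul_nonneg hK.le (Real.rpow_nonneg ht0 _)) _)
    have hbnd : ∀ u ∈ Ico (0:ℝ) t,
        ‖moll d α b |u - s| (us u) - moll d α b |u - r| (ur u)‖
          ≤ 2*(Mgam d γ*C₀)*t^(γ/α) + (C₀*(K*t^(e-1))^γ) * u ^ γ := by
      intro u hu
      have hu0 := hu.1
      have hut := hu.2.le
      have habs : ∀ w ∈ Icc (0:ℝ) t, |u - w| ≤ t := fun w hw =>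
        abs_le.mpr ⟨by linarith [hw.2], by linarith [hw.1]⟩
      have hclose_s := moll_close hα hγ0 hγ1 hC₀.le hb_cont hb_bdd hb_hol
        (abs_nonneg (u - s)) (us u)
      have hclose_r := moll_close hα hγ0 hγ1 hC₀.le hb_cont hb_bdd hb_hol
        (abs_nonneg (u - r)) (ur u)
      have hrs : |u - s| ^ (γ/α) ≤ t ^ (γ/α) :=
        Real.rpow_le_rpow (abs_nonneg _) (habs s hs) hq
      have hrr : |u - r| ^ (γ/α) ≤ t ^ (γ/α) :=
        Real.rpow_le_rpow (abs_nonneg _) (habs r hr) hq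
      have hhol := hb_hol (us u) (ur u)
      have hIH := IH t ⟨ht0, htT⟩ s hs r hr x us ur h1 h2 u ⟨hu0, hut⟩
      have hMC : 0 ≤ Mgam d γ * C₀ := mul_nonneg hM hC₀.le
      have hnorm : ‖us u - ur u‖ ^ γ ≤ (K*t^(e-1))^γ * u^γ := by
        calc ‖us u - ur u‖ ^ γ ≤ (K * u * t^(e-1)) ^ γ :=
            Real.rpow_le_rpow (norm_nonneg _) hIH hγ0.le
          _ = ((K*t^(e-1)) * u) ^ γ := by rw [show K * u * t^(e-1) = (K*t^(e-1)) * u by ring]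
          _ = (K*t^(e-1))^γ * u^γ :=
            Real.mul_rpow (mul_nonneg hK.le (Real.rpow_nonneg ht0 _)) hu0
      have htri : moll d α b |u-s| (us u) - moll d α b |u-r| (ur u)
          = (moll d α b |u-s| (us u) - b (us u)) + (b (us u) - b (ur u))
            + (b (ur u) - moll d α b |u-r| (ur u)) := by abel
      rw [htri]
      have hmid : ‖b (us u) - b (ur u)‖ ≤ (C₀*(K*t^(e-1))^γ) * u^γ := by
        calc ‖b (us u) - b (ur u)‖ ≤ C₀ * ‖us u - ur u‖ ^ γ := hhol
          _ ≤ C₀ * ((K*t^(e-1))^γ * u^γ) := mul_le_mul_of_nonneg_left hnorm hC₀.le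
          _ = (C₀*(K*t^(e-1))^γ) * u^γ := by ring
      have hlast : ‖b (ur u) - moll d α b |u-r| (ur u)‖ ≤ Mgam d γ * C₀ * t^(γ/α) := by
        rw [norm_sub_rev]
        calc ‖moll d α b |u-r| (ur u) - b (ur u)‖ ≤ Mgam d γ * C₀ * |u-r|^(γ/α) := hclose_r
          _ ≤ Mgam d γ * C₀ * t^(γ/α) := mul_le_mul_of_nonneg_left hrr hMC
      have hfirst : ‖moll d α b |u-s| (us u) - b (us u)‖ ≤ Mgam d γ * C₀ * t^(γ/α) := by
        calc ‖moll d α b |u-s| (us u) - b (us u)‖ ≤ Mgam d γ * C₀ * |u-s|^(γ/α) := hclose_s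
          _ ≤ Mgam d γ * C₀ * t^(γ/α) := mul_le_mul_of_nonneg_left hrs hMC
      calc ‖_ + _ + _‖ ≤ ‖moll d α b |u-s| (us u) - b (us u)‖ + ‖b (us u) - b (ur u)‖
            + ‖b (ur u) - moll d α b |u-r| (ur u)‖ := norm_add₃_le
        _ ≤ 2*(Mgam d γ*C₀)*t^(γ/α) + (C₀*(K*t^(e-1))^γ) * u ^ γ := by linarith
    have hmain := sol_dist_le h1 h2 ht0 hc2 hγ0 hbnd τ hτ
    have hτ0 := hτ.1
    have hτt := hτ.2
    have habs1 : t^(γ/α) ≤ T^(γ/α - (e'-1)) * t^(e'-1) :=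
      rpow_absorb hT ht0 htT (by linarith) (by linarith)
    have hsplit : τ^(γ+1) ≤ t^γ * τ := by
      calc τ^(γ+1) = τ^γ * τ^(1:ℝ) := Real.rpow_add_of_nonneg hτ0 hγ0.le zero_le_one
        _ = τ^γ * τ := by rw [Real.rpow_one]
        _ ≤ t^γ * τ := mul_le_mul_of_nonneg_right (Real.rpow_le_rpow hτ0 hτt hγ0.le) hτ0
    have hKt : (K*t^(e-1))^γ = K^γ * t^((e-1)*γ) := by
      rw [Real.mul_rpow hK.le (Real.rpow_nonneg ht0 _), ← Real.rpow_mul ht0]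
    have hmerge : t^((e-1)*γ) * t^γ = t^(γ*e) := by
      rw [← Real.rpow_add_of_nonneg ht0 (mul_nonneg (by linarith) hγ0.le) hγ0.le,
        show (e-1)*γ + γ = γ*e by ring]
    have habs2 : t^(γ*e) ≤ T^(γ*e - (e'-1)) * t^(e'-1) :=
      rpow_absorb hT ht0 htT (by linarith) (by linarith)
    have hterm1 : (2*(Mgam d γ*C₀)*t^(γ/α)) * τ ≤ A * τ * t^(e'-1) := by
      calc (2*(Mgam d γ*C₀)*t^(γ/α)) * τ
          ≤ (2*(Mgam d γ*C₀)*(T^(γ/α-(e'-1))*t^(e'-1))) * τ :=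
            mul_le_mul_of_nonneg_right
              (mul_le_mul_of_nonneg_left habs1 (by nlinarith [mul_nonneg hM hC₀.le])) hτ0
        _ = A * τ * t^(e'-1) := by rw [hAdef]; ring
    have hterm2 : ((C₀*(K*t^(e-1))^γ)/(γ+1)) * τ^(γ+1) ≤ B * τ * t^(e'-1) := by
      have hcc : 0 ≤ (C₀*(K*t^(e-1))^γ)/(γ+1) := div_nonneg hc2 (by linarith)
      calc ((C₀*(K*t^(e-1))^γ)/(γ+1)) * τ^(γ+1)
          ≤ ((C₀*(K*t^(e-1))^γ)/(γ+1)) * (t^γ * τ) := mul_le_mul_of_nonneg_left hsplit hcc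
        _ = (C₀*K^γ/(γ+1)) * (t^((e-1)*γ) * t^γ) * τ := by rw [hKt]; ring
        _ = (C₀*K^γ/(γ+1)) * t^(γ*e) * τ := by rw [hmerge]
        _ ≤ (C₀*K^γ/(γ+1)) * (T^(γ*e-(e'-1))*t^(e'-1)) * τ := by
            apply mul_le_mul_of_nonneg_right _ hτ0
            exact mul_le_mul_of_nonneg_left habs2
              (div_nonneg (mul_nonneg hC₀.le (Real.rpow_nonneg hK.le _)) (by linarith))
        _ = B * τ * t^(e'-1) := by rw [hBdef]; ring
    have hfin : 0 ≤ τ * t^(e'-1) := mul_nonneg hτ0 (Real.rpow_nonneg ht0 _)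
    calc ‖us τ - ur τ‖
        ≤ (2*(Mgam d γ*C₀)*t^(γ/α)) * τ + ((C₀*(K*t^(e-1))^γ)/(γ+1)) * τ^(γ+1) := hmain
      _ ≤ A * τ * t^(e'-1) + B * τ * t^(e'-1) := add_le_add hterm1 hterm2
      _ ≤ (A + B + 1) * τ * t^(e'-1) := by nlinarith

end Boot

theorem approximate_flows_closeness
    (d : ℕ) (hd : 1 ≤ d) (α γ C₀ : ℝ)
    (hα : α ∈ Set.Ioo (0 : ℝ) 2) (hγ : γ ∈ Set.Ioc (0 : ℝ) 1) (hC₀ : 0 < C₀)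
    (b : Euc d → Euc d)
    (hb_bdd : ∀ x, ‖b x‖ ≤ C₀)
    (hb_hol : ∀ x y, ‖b x - b y‖ ≤ C₀ * ‖x - y‖ ^ γ)
    (hbal : 1 < α + γ)
    (δ : ℝ) (hδ : δ = 1 - 1 / α + γ / α) :
    ∀ T > (0 : ℝ), ∃ C > (0 : ℝ),
      ∀ t ∈ Set.Icc (0 : ℝ) T, ∀ s ∈ Set.Icc (0 : ℝ) t, ∀ r ∈ Set.Icc (0 : ℝ) t,
      ∀ x y : Euc d,
      (∀ us ur : ℝ → Euc d,
        IsSol d (fun τ z => moll d α b |τ - s| z) x us →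
        IsSol d (fun τ z => moll d α b |τ - r| z) x ur →
        ‖us t - ur t‖ ≤ C * t ^ (1 / α + δ)) ∧
      (∀ ts tr : ℝ → Euc d,
        IsSol d (fun τ z => -moll d α b |τ - s| z) y ts →
        IsSol d (fun τ z => -moll d α b |τ - r| z) y tr →
        ‖ts t - tr t‖ ≤ C * t ^ (1 / α + δ)) := by
  intro T hT
  obtain ⟨hα0, _hα2⟩ := hα
  obtain ⟨hγ0, hγ1⟩ := hγ
  have hb_cont : Continuous b := cont_of_holder hγ0 hb_hol
  set b' : Euc d → Euc d := fun y => -(b y) with hb'def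
  have hb'_cont : Continuous b' := hb_cont.neg
  have hb'_bdd : ∀ x, ‖b' x‖ ≤ C₀ := fun x => by
    rw [hb'def]; simpa using hb_bdd x
  have hb'_hol : ∀ x y, ‖b' x - b' y‖ ≤ C₀ * ‖x - y‖ ^ γ := fun x y => by
    rw [hb'def]
    simp only [neg_sub_neg]
    rw [norm_sub_rev]
    exact hb_hol x y
  obtain ⟨N, hN⟩ := eseq_reaches hα0 hγ0 hγ1 hbal
  obtain ⟨K1, hK1, H1⟩ := bootstrap hα0 hγ0 hγ1 hC₀ hb_cont hb_bdd hb_hol hT N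
  obtain ⟨K2, hK2, H2⟩ := bootstrap (b := b') hα0 hγ0 hγ1 hC₀ hb'_cont hb'_bdd hb'_hol hT N
  refine ⟨K1 + K2, by linarith, ?_⟩
  intro t ht s hs r hr x y
  have hexp : 1 / α + δ = 1 + γ / α := by rw [hδ]; ring
  have ht0 : 0 ≤ t := ht.1
  have hpow : t * t ^ (eseq α γ N - 1) = t ^ (1 / α + δ) := by
    rw [hexp, hN, Real.rpow_add_of_nonneg ht0 zero_le_one (by positivity : (0:ℝ) ≤ γ/α),
      Real.rpow_one]
    ring_nf
  have hpow_nonneg : 0 ≤ t * t ^ (eseq α γ N - 1) :=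
    mul_nonneg ht0 (Real.rpow_nonneg ht0 _)
  constructor
  · intro us ur h1 h2
    have := H1 t ht s hs r hr x us ur h1 h2 t ⟨ht0, le_refl t⟩
    calc ‖us t - ur t‖ ≤ K1 * t * t ^ (eseq α γ N - 1) := this
      _ = K1 * (t * t ^ (eseq α γ N - 1)) := by ring
      _ ≤ (K1 + K2) * (t * t ^ (eseq α γ N - 1)) := by nlinarith
      _ = (K1 + K2) * t ^ (1 / α + δ) := by rw [hpow]
  · intro ts tr h1 h2
    have hEqs : (fun τ (z : Euc d) => -moll d α b |τ - s| z)
        = fun τ z => moll d α b' |τ - s| z := by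
      funext τ z
      rw [hb'def, moll_neg]
    have hEqr : (fun τ (z : Euc d) => -moll d α b |τ - r| z)
        = fun τ z => moll d α b' |τ - r| z := by
      funext τ z
      rw [hb'def, moll_neg]
    rw [hEqs] at h1
    rw [hEqr] at h2
    have := H2 t ht s hs r hr y ts tr h1 h2 t ⟨ht0, le_refl t⟩
    calc ‖ts t - tr t‖ ≤ K2 * t * t ^ (eseq α γ N - 1) := this
      _ = K2 * (t * t ^ (eseq α γ N - 1)) := by ring
      _ ≤ (K1 + K2) * (t * t ^ (eseq α γ N - 1)) := by nlinarith
      _ = (K1 + K2) * t ^ (1 / α + δ) := by rw [hpow]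
end

section
/- Let g : ℝ^d → (0,∞) be continuously differentiable and rotationally invariant (g(x) depends only on |x|), and suppose there exists C₀ > 0 such that |∇g(x)| ≤ C₀ g(x)/(1 + |x|) for all x ∈ ℝ^d. Then for every V > 0 there exists a constant C_V > 0 such that for every v ∈ [0,V] and all x, y ∈ ℝ^d satisfying e^{−v}|x| − v ≤ |y| ≤ e^{v}|x| + v, one has e^{−C_V v} g(x) ≤ g(y) ≤ e^{C_V v} g(x). -/
open Real Set

theorem radial_density_comparison
    (d : ℕ) (hd : 1 ≤ d) (C₀ : ℝ) (hC₀ : 0 < C₀)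
    (g : Euc d → ℝ)
    (hg_pos : ∀ x, 0 < g x)
    (hg_smooth : ContDiff ℝ 1 g)
    (hg_rot : ∀ x y : Euc d, ‖x‖ = ‖y‖ → g x = g y)
    (hg_grad : ∀ x : Euc d, ‖gradient g x‖ ≤ C₀ * g x / (1 + ‖x‖)) :
    ∀ V > (0 : ℝ), ∃ C > (0 : ℝ), ∀ v ∈ Set.Icc (0 : ℝ) V, ∀ x y : Euc d,
      Real.exp (-v) * ‖x‖ - v ≤ ‖y‖ → ‖y‖ ≤ Real.exp v * ‖x‖ + v →
      Real.exp (-(C * v)) * g x ≤ g y ∧ g y ≤ Real.exp (C * v) * g x := by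
  intro V hV
  refine ⟨2 * C₀, by positivity, ?_⟩
  rintro v ⟨hv0, hvV⟩ x y hy1 hy2
  have hd0 : 0 < d := hd
  set e : Euc d := EuclideanSpace.single (⟨0, hd0⟩ : Fin d) (1 : ℝ) with he
  have he1 : ‖e‖ = 1 := by simp [he]
  set u : ℝ → Euc d := fun t => (Real.exp t - 1) • e with hu
  have hnu : ∀ t, 0 ≤ t → ‖u t‖ = Real.exp t - 1 := by
    intro t ht
    have h1 : (0 : ℝ) ≤ Real.exp t - 1 := by
      have := Real.one_le_exp ht; linarith
    simp [hu, norm_smul, he1, abs_of_nonneg h1]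
  set F : ℝ → ℝ := fun t => Real.log (g (u t)) with hF
  have hgdiff : Differentiable ℝ g := hg_smooth.differentiable one_ne_zero
  have hFd : ∀ t : ℝ, HasDerivAt F
      (fderiv ℝ g (u t) (Real.exp t • e) / g (u t)) t := by
    intro t
    have h1 : HasDerivAt (fun s : ℝ => Real.exp s - 1) (Real.exp t) t :=
      (Real.hasDerivAt_exp t).sub_const 1
    have h2 : HasDerivAt u (Real.exp t • e) t := h1.smul_const e
    have h3 : HasDerivAt (fun s => g (u s)) (fderiv ℝ g (u t) (Real.exp t • e)) t :=
      (hgdiff (u t)).hasFDerivAt.comp_hasDerivAt t h2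
    exact h3.log (ne_of_gt (hg_pos _))
  have hbound : ∀ t ∈ Ici (0 : ℝ),
      ‖fderiv ℝ g (u t) (Real.exp t • e) / g (u t)‖ ≤ C₀ := by
    intro t ht
    have hgt := hg_pos (u t)
    have hgradnorm : ‖fderiv ℝ g (u t)‖ = ‖gradient g (u t)‖ := by
      rw [gradient]
      exact (LinearIsometryEquiv.norm_map _ _).symm
    have h1 : ‖fderiv ℝ g (u t) (Real.exp t • e)‖ ≤
        ‖gradient g (u t)‖ * Real.exp t := by
      calc ‖fderiv ℝ g (u t) (Real.exp t • e)‖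
          ≤ ‖fderiv ℝ g (u t)‖ * ‖Real.exp t • e‖ := (fderiv ℝ g (u t)).le_opNorm _
        _ = ‖gradient g (u t)‖ * Real.exp t := by
            rw [hgradnorm, norm_smul, he1, mul_one, Real.norm_eq_abs,
              abs_of_pos (Real.exp_pos t)]
    have h2 := hg_grad (u t)
    have h3 : 1 + ‖u t‖ = Real.exp t := by rw [hnu t ht]; ring
    rw [Real.norm_eq_abs, abs_div, abs_of_pos hgt, div_le_iff₀ hgt]
    calc |fderiv ℝ g (u t) (Real.exp t • e)|
        ≤ ‖gradient g (u t)‖ * Real.exp t := h1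
      _ ≤ (C₀ * g (u t) / (1 + ‖u t‖)) * Real.exp t := by
          have hexp := Real.exp_pos t
          exact mul_le_mul_of_nonneg_right h2 hexp.le
      _ = C₀ * g (u t) := by
          rw [h3]
          field_simp
  have key : ∀ a ∈ Ici (0 : ℝ), ∀ b ∈ Ici (0 : ℝ), |F b - F a| ≤ C₀ * |b - a| := by
    intro a ha b hb
    have := (convex_Ici (0 : ℝ)).norm_image_sub_le_of_norm_hasDerivWithin_le
      (fun t _ => (hFd t).hasDerivWithinAt) hbound ha hb
    simpa [Real.norm_eq_abs] using this
  -- the two parameters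
  set a : ℝ := Real.log (1 + ‖x‖) with ha
  set b : ℝ := Real.log (1 + ‖y‖) with hb
  have hxnn : (0 : ℝ) ≤ ‖x‖ := norm_nonneg x
  have hynn : (0 : ℝ) ≤ ‖y‖ := norm_nonneg y
  have hxpos : (0 : ℝ) < 1 + ‖x‖ := by linarith
  have hypos : (0 : ℝ) < 1 + ‖y‖ := by linarith
  have ha0 : a ∈ Ici (0 : ℝ) := by
    rw [ha]; exact Real.log_nonneg (by linarith)
  have hb0 : b ∈ Ici (0 : ℝ) := by
    rw [hb]; exact Real.log_nonneg (by linarith)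
  have hua : u a = ‖x‖ • e := by
    rw [hu]; simp only
    rw [ha, Real.exp_log hxpos]
    ring_nf
  have hub : u b = ‖y‖ • e := by
    rw [hu]; simp only
    rw [hb, Real.exp_log hypos]
    ring_nf
  have hFa : F a = Real.log (g x) := by
    rw [hF]; simp only
    rw [hua]
    congr 1
    refine hg_rot _ _ ?_
    rw [norm_smul, he1, mul_one, Real.norm_eq_abs, abs_of_nonneg hxnn]
  have hFb : F b = Real.log (g y) := by
    rw [hF]; simp only
    rw [hub]
    congr 1
    refine hg_rot _ _ ?_
    rw [norm_smul, he1, mul_one, Real.norm_eq_abs, abs_of_nonneg hynn]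
  -- |b - a| ≤ 2 v
  have hba : b - a ≤ 2 * v := by
    have h1 : 1 + ‖y‖ ≤ Real.exp v * (1 + ‖x‖) := by
      have := Real.add_one_le_exp v
      have hE : Real.exp v * ‖x‖ + Real.exp v ≥ Real.exp v * ‖x‖ + v + 1 := by linarith
      nlinarith
    have h2 : b ≤ v + a := by
      rw [hb, ha]
      calc Real.log (1 + ‖y‖) ≤ Real.log (Real.exp v * (1 + ‖x‖)) :=
            Real.log_le_log hypos h1
        _ = v + Real.log (1 + ‖x‖) := by
            rw [Real.log_mul (Real.exp_ne_zero v) (ne_of_gt hxpos), Real.log_exp]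
    linarith
  have hab : a - b ≤ 2 * v := by
    have hEx : ‖x‖ ≤ Real.exp v * ‖y‖ + Real.exp v * v := by
      have h0 : Real.exp (-v) * ‖x‖ ≤ ‖y‖ + v := by linarith
      have h1 := mul_le_mul_of_nonneg_left h0 (Real.exp_pos v).le
      rw [← mul_assoc, ← Real.exp_add] at h1
      simp at h1
      linarith [h1]
    have hE : Real.exp v * v + 1 ≤ Real.exp (2 * v) := by
      have h1 := Real.add_one_le_exp v
      have h2 : Real.exp (2 * v) = Real.exp v * Real.exp v := by
        rw [← Real.exp_add]; ring_nf
      have h3 : Real.exp v * (v + 1) ≤ Real.exp v * Real.exp v :=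
        mul_le_mul_of_nonneg_left (by linarith) (Real.exp_pos v).le
      have h4 : Real.exp v * (v + 1) = Real.exp v * v + Real.exp v := by ring
      linarith
    have hEE : Real.exp v ≤ Real.exp (2 * v) := Real.exp_le_exp.mpr (by linarith)
    have h1 : 1 + ‖x‖ ≤ Real.exp (2 * v) * (1 + ‖y‖) := by
      have h4 : Real.exp v * ‖y‖ ≤ Real.exp (2 * v) * ‖y‖ :=
        mul_le_mul_of_nonneg_right hEE hynn
      have h5 : Real.exp (2 * v) * (1 + ‖y‖) = Real.exp (2 * v) + Real.exp (2 * v) * ‖y‖ := by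
        ring
      linarith
    have h2 : a ≤ 2 * v + b := by
      rw [ha, hb]
      calc Real.log (1 + ‖x‖) ≤ Real.log (Real.exp (2 * v) * (1 + ‖y‖)) :=
            Real.log_le_log hxpos h1
        _ = 2 * v + Real.log (1 + ‖y‖) := by
            rw [Real.log_mul (Real.exp_ne_zero _) (ne_of_gt hypos), Real.log_exp]
    linarith
  have habs : |b - a| ≤ 2 * v := abs_sub_le_iff.mpr ⟨hba, hab⟩
  have hlog : |Real.log (g y) - Real.log (g x)| ≤ 2 * C₀ * v := by
    have := key a ha0 b hb0
    rw [hFa, hFb] at this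
    calc |Real.log (g y) - Real.log (g x)| ≤ C₀ * |b - a| := this
      _ ≤ C₀ * (2 * v) := by
          exact mul_le_mul_of_nonneg_left habs hC₀.le
      _ = 2 * C₀ * v := by ring
  obtain ⟨hl1, hl2⟩ := abs_sub_le_iff.mp hlog
  constructor
  · have : Real.log (g x) - 2 * C₀ * v ≤ Real.log (g y) := by linarith
    have h := Real.exp_le_exp.mpr this
    rw [Real.exp_sub, Real.exp_log (hg_pos x), Real.exp_log (hg_pos y)] at h
    rw [Real.exp_neg]
    calc (Real.exp (2 * C₀ * v))⁻¹ * g x = g x / Real.exp (2 * C₀ * v) := by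
          rw [div_eq_mul_inv]; ring
      _ ≤ g y := h
  · have : Real.log (g y) ≤ Real.log (g x) + 2 * C₀ * v := by linarith
    have h := Real.exp_le_exp.mpr this
    rw [Real.exp_add, Real.exp_log (hg_pos x), Real.exp_log (hg_pos y)] at h
    calc g y ≤ g x * Real.exp (2 * C₀ * v) := h
      _ = Real.exp (2 * C₀ * v) * g x := by ring
end
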